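/- arXiv:1301.3375 — 4 statements merged into one kernel-verified Lean document; each statement's English description precedes it below -/
import Mathlib

section
/- Let c ∈ ℝ^K be a nonnegative nonincreasing sequence with ‖c‖₂ = 1, and let Φ = (φ₁,…,φ_K) be a collection of unit vectors in ℝ^d with coherence μ = max_{i≠j} |⟨φ_i, φ_j⟩|. For any permutation p of {1,…,K} and any sign sequence σ ∈ {−1,1}^K, set x = c_{p,σ} where x(i) = σ_i c_{p(i)}, and let i_p = p⁻¹(1). Then |⟨φ_{i_p}, Φx⟩| ≥ c₁ − μ‖c‖₁, and for every i ≠ i_p, |⟨φ_i, Φx⟩| ≤ c₂ + μ‖c‖₁. In particular, if c₁ > c₂ + 2μ‖c‖₁ then max_{i} |⟨φ_i, Φx⟩| = |⟨φ_{i_p}, Φx⟩|. -/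
open scoped RealInnerProductSpace BigOperators

/-- bounds on inner products with the generating dictionary for a
signal `y = Φ c_{p,σ}` with decaying coefficients. -/
theorem ksvd_inner_product_bounds {d K : ℕ} (hK : 2 ≤ K)
    (φ : Fin K → EuclideanSpace ℝ (Fin d)) (hφ : ∀ i, ‖φ i‖ = 1)
    (μ : ℝ) (hμ : ∀ i j : Fin K, i ≠ j → |(⟪φ i, φ j⟫)| ≤ μ)
    (c : Fin K → ℝ) (hc0 : ∀ i, 0 ≤ c i) (hmono : ∀ i j : Fin K, i ≤ j → c j ≤ c i)
    (hc2 : ∑ i, (c i) ^ 2 = 1)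
    (p : Equiv.Perm (Fin K)) (σ : Fin K → ℝ) (hσ : ∀ i, σ i = 1 ∨ σ i = -1)
    (x : Fin K → ℝ) (hx : ∀ i, x i = σ i * c (p i))
    (y : EuclideanSpace ℝ (Fin d)) (hy : y = ∑ j, x j • φ j)
    (ip : Fin K) (hip : ip = p.symm ⟨0, by omega⟩) :
    (c ⟨0, by omega⟩ - μ * ∑ j, c j ≤ |(⟪φ ip, y⟫)|) ∧
    (∀ i, i ≠ ip → |(⟪φ i, y⟫)| ≤ c ⟨1, by omega⟩ + μ * ∑ j, c j) ∧
    (c ⟨1, by omega⟩ + 2 * μ * (∑ j, c j) < c ⟨0, by omega⟩ →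
      ∀ i, |(⟪φ i, y⟫)| ≤ |(⟪φ ip, y⟫)|) := by
  set z0 : Fin K := ⟨0, by omega⟩ with hz0
  set z1 : Fin K := ⟨1, by omega⟩ with hz1
  have habs : ∀ j, |x j| = c (p j) := by
    intro j
    rw [hx, abs_mul]
    rcases hσ j with h | h <;> simp [h, abs_of_nonneg (hc0 _)]
  have hμ0 : 0 ≤ μ := le_trans (abs_nonneg _) (hμ z0 z1 (by simp [hz0, hz1, Fin.ext_iff]))
  have hsumc : ∑ j, c (p j) = ∑ j, c j := Equiv.sum_comp p c
  have key : ∀ i, ⟪φ i, y⟫ = x i + ∑ j ∈ Finset.univ.erase i, x j * ⟪φ i, φ j⟫ := by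
    intro i
    rw [hy, inner_sum]
    simp_rw [real_inner_smul_right]
    rw [← Finset.add_sum_erase _ _ (Finset.mem_univ i)]
    have : ⟪φ i, φ i⟫ = 1 := by
      rw [real_inner_self_eq_norm_sq, hφ i]; norm_num
    rw [this, mul_one]
  have hrest : ∀ i, |∑ j ∈ Finset.univ.erase i, x j * ⟪φ i, φ j⟫| ≤ μ * ∑ j, c j := by
    intro i
    calc |∑ j ∈ Finset.univ.erase i, x j * ⟪φ i, φ j⟫|
        ≤ ∑ j ∈ Finset.univ.erase i, |x j * ⟪φ i, φ j⟫| := Finset.abs_sum_le_sum_abs _ _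
      _ ≤ ∑ j ∈ Finset.univ.erase i, c (p j) * μ := by
          apply Finset.sum_le_sum
          intro j hj
          rw [abs_mul, habs]
          exact mul_le_mul_of_nonneg_left (hμ i j (Finset.ne_of_mem_erase hj).symm) (hc0 _)
      _ ≤ ∑ j, c (p j) * μ := by
          apply Finset.sum_le_sum_of_subset_of_nonneg (Finset.subset_univ _)
          intro j _ _
          exact mul_nonneg (hc0 _) hμ0
      _ = μ * ∑ j, c j := by rw [← hsumc, ← Finset.sum_mul, mul_comm]
  have hpip : p ip = z0 := by rw [hip]; simp
  have hlow : c z0 - μ * ∑ j, c j ≤ |⟪φ ip, y⟫| := by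
    have := abs_sub_abs_le_abs_sub (x ip) (-(∑ j ∈ Finset.univ.erase ip, x j * ⟪φ ip, φ j⟫))
    rw [sub_neg_eq_add, abs_neg] at this
    rw [key ip]
    have h2 := hrest ip
    have h3 : |x ip| = c z0 := by rw [habs, hpip]
    linarith
  have hupp : ∀ i, i ≠ ip → |⟪φ i, y⟫| ≤ c z1 + μ * ∑ j, c j := by
    intro i hi
    have hpine : p i ≠ z0 := fun h => hi (by rw [hip, ← h]; simp)
    have h1le : z1 ≤ p i := by
      have : (p i).1 ≠ 0 := fun h => hpine (Fin.ext h)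
      exact Fin.mk_le_of_le_val (by omega)
    have hci : c (p i) ≤ c z1 := hmono _ _ h1le
    rw [key i]
    calc |x i + ∑ j ∈ Finset.univ.erase i, x j * ⟪φ i, φ j⟫|
        ≤ |x i| + |∑ j ∈ Finset.univ.erase i, x j * ⟪φ i, φ j⟫| := abs_add_le _ _
      _ ≤ c z1 + μ * ∑ j, c j := by
          rw [habs]; exact add_le_add hci (hrest i)
  refine ⟨hlow, hupp, fun hgap i => ?_⟩
  by_cases hi : i = ip
  · rw [hi]
  · exact le_trans (hupp i hi) (by linarith)
end

section
/- Let Φ be a d×K unit-norm tight frame with frame constant A = K/d, i.e., ΦΦ* = A·I_d. Let c ∈ ℝ^K be nonnegative nonincreasing with ‖c‖₂ = 1, p uniformly random over permutations, σ uniformly random over signs, and i_p = p⁻¹(1). Then E_p E_σ |⟨φ_{i_p}, Φ c_{p,σ}⟩|² = c₁² + ((1−c₁²)/(K−1))(A − 1). -/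
open scoped RealInnerProductSpace BigOperators


lemma sum_sign_pair {K : ℕ} {j k : Fin K} (hjk : j ≠ k) (x : ℝ) :
    ∑ σ : Fin K → Bool, ((if σ j then (1:ℝ) else -1) * (if σ k then (1:ℝ) else -1)) * x = 0 := by
  set F : (Fin K → Bool) → ℝ :=
    fun σ => ((if σ j then (1:ℝ) else -1) * (if σ k then (1:ℝ) else -1)) * x with hF
  have hinv : Function.Involutive (fun σ : Fin K → Bool => Function.update σ j (!σ j)) := by
    intro σ; funext x; by_cases hx : x = j <;> simp [Function.update_apply, hx]
  have h1 : ∑ σ, F ((hinv.toPerm) σ) = ∑ σ, F σ := Equiv.sum_comp _ F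
  have h2 : ∀ σ, F ((hinv.toPerm) σ) = - F σ := by
    intro σ
    have hj : (Function.update σ j (!σ j)) j = !σ j := Function.update_self _ _ _
    have hk : (Function.update σ j (!σ j)) k = σ k :=
      Function.update_of_ne (Ne.symm hjk) _ _
    simp only [hF, Function.Involutive.toPerm, Equiv.coe_fn_mk, hj, hk]
    cases σ j <;> cases σ k <;> ring_nf <;> simp
  rw [Finset.sum_congr rfl (fun σ _ => h2 σ), Finset.sum_neg_distrib] at h1
  linarith

lemma sign_expand {K : ℕ} (b : Fin K → ℝ) :
    ∑ σ : Fin K → Bool, (∑ j, (if σ j then (1:ℝ) else -1) * b j) ^ 2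
      = 2 ^ K * ∑ j, (b j) ^ 2 := by
  have h1 : ∀ σ : Fin K → Bool, (∑ j, (if σ j then (1:ℝ) else -1) * b j) ^ 2
      = ∑ j, ∑ k, ((if σ j then (1:ℝ) else -1) * (if σ k then (1:ℝ) else -1)) * (b j * b k) := by
    intro σ
    rw [sq, Finset.sum_mul_sum]
    exact Finset.sum_congr rfl fun j _ => Finset.sum_congr rfl fun k _ => by ring
  simp_rw [h1]
  rw [Finset.sum_comm]
  rw [Finset.mul_sum]
  refine Finset.sum_congr rfl fun j _ => ?_
  rw [Finset.sum_comm]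
  rw [Finset.sum_eq_single j]
  · have : ∀ σ : Fin K → Bool,
        ((if σ j then (1:ℝ) else -1) * (if σ j then (1:ℝ) else -1)) * (b j * b j)
        = b j ^ 2 := by intro σ; cases σ j <;> simp <;> ring
    rw [Finset.sum_congr rfl fun σ _ => this σ, Finset.sum_const, Finset.card_univ]
    simp [Fintype.card_fun]
  · intro k _ hkj
    exact sum_sign_pair (Ne.symm hkj) _
  · simp

/-- for a unit-norm tight frame `Φ` with frame constant `A = K/d`, the
expectation over permutations and signs of `|⟨φ_{i_p}, Φ c_{p,σ}⟩|²`. -/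
theorem expectation_max_response_tight_frame {d K : ℕ} (hK : 2 ≤ K) (hd : 0 < d)
    (φ : Fin K → EuclideanSpace ℝ (Fin d))
    (hφ : ∀ i, ‖φ i‖ = 1)
    (A : ℝ) (hA : A = (K : ℝ) / d)
    (htf : ∀ v : EuclideanSpace ℝ (Fin d), ∑ i, (⟪φ i, v⟫ : ℝ) ^ 2 = A * ‖v‖ ^ 2)
    (c : Fin K → ℝ) (hc0 : ∀ i, 0 ≤ c i) (hmono : ∀ i j : Fin K, i ≤ j → c j ≤ c i)
    (hc2 : ∑ i, (c i) ^ 2 = 1) :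
    (∑ p : Equiv.Perm (Fin K), ∑ σ : Fin K → Bool,
        |(⟪φ (p.symm ⟨0, by omega⟩),
            ∑ j, ((if σ j then (1 : ℝ) else -1) * c (p j)) • φ j⟫)| ^ 2)
      / (K.factorial * 2 ^ K)
    = (c ⟨0, by omega⟩) ^ 2
      + (1 - (c ⟨0, by omega⟩) ^ 2) / ((K : ℝ) - 1) * (A - 1) := by
  set z : Fin K := ⟨0, by omega⟩ with hz
  set G : Fin K → Fin K → ℝ := fun i j => (⟪φ i, φ j⟫ : ℝ) with hG
  have hGii : ∀ i, G i i = 1 := by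
    intro i
    have h := real_inner_self_eq_norm_sq (φ i)
    rw [hφ i] at h
    simpa [hG] using h
  have hrow : ∀ i, ∑ j, G i j ^ 2 = A := by
    intro i
    have h := htf (φ i)
    simp only [hφ i, one_pow, mul_one] at h
    rw [← h]
    exact Finset.sum_congr rfl fun j _ => by rw [hG, real_inner_comm]
  -- Step 1: sign average
  have step1 : ∀ p : Equiv.Perm (Fin K),
      ∑ σ : Fin K → Bool,
        |(⟪φ (p.symm z), ∑ j, ((if σ j then (1 : ℝ) else -1) * c (p j)) • φ j⟫)| ^ 2
      = 2 ^ K * ∑ j, (c (p j) * G (p.symm z) j) ^ 2 := by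
    intro p
    have hin : ∀ σ : Fin K → Bool,
        (⟪φ (p.symm z), ∑ j, ((if σ j then (1 : ℝ) else -1) * c (p j)) • φ j⟫ : ℝ)
        = ∑ j, (if σ j then (1:ℝ) else -1) * (c (p j) * G (p.symm z) j) := by
      intro σ
      rw [inner_sum]
      exact Finset.sum_congr rfl fun j _ => by
        rw [real_inner_smul_right]; ring
    calc ∑ σ : Fin K → Bool,
          |(⟪φ (p.symm z), ∑ j, ((if σ j then (1 : ℝ) else -1) * c (p j)) • φ j⟫)| ^ 2
        = ∑ σ : Fin K → Bool,
          (∑ j, (if σ j then (1:ℝ) else -1) * (c (p j) * G (p.symm z) j)) ^ 2 := by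
          refine Finset.sum_congr rfl fun σ _ => ?_
          rw [sq_abs, hin σ]
      _ = 2 ^ K * ∑ j, (c (p j) * G (p.symm z) j) ^ 2 := sign_expand _
  rw [Finset.sum_congr rfl fun p _ => step1 p]
  -- Step 2: reindex inner sum j = p.symm m, then p ↦ p⁻¹
  have step2 : ∀ p : Equiv.Perm (Fin K),
      ∑ j, (c (p j) * G (p.symm z) j) ^ 2 = ∑ m, (c m)^2 * (G (p.symm z) (p.symm m))^2 := by
    intro p
    rw [← Equiv.sum_comp p.symm (fun j => (c (p j) * G (p.symm z) j) ^ 2)]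
    exact Finset.sum_congr rfl fun m _ => by
      rw [Equiv.apply_symm_apply]; ring
  simp_rw [step2]
  have step3 : ∑ p : Equiv.Perm (Fin K), (2:ℝ) ^ K * ∑ m, (c m)^2 * (G (p.symm z) (p.symm m))^2
      = 2 ^ K * ∑ m, (c m)^2 * ∑ p : Equiv.Perm (Fin K), (G (p z) (p m))^2 := by
    rw [← Finset.mul_sum]
    congr 1
    rw [Finset.sum_comm]
    refine Finset.sum_congr rfl fun m _ => ?_
    rw [← Finset.mul_sum]
    congr 1
    exact Fintype.sum_equiv (Equiv.inv (Equiv.Perm (Fin K)))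
      _ _ (fun p => by simp [Equiv.Perm.inv_def])
  rw [step3]
  set T : Fin K → ℝ := fun m => ∑ p : Equiv.Perm (Fin K), (G (p z) (p m))^2 with hT
  have hcard : (Finset.univ : Finset (Equiv.Perm (Fin K))).card = K.factorial := by
    rw [Finset.card_univ, Fintype.card_perm, Fintype.card_fin]
  have hTz : T z = K.factorial := by
    simp only [hT, hGii, one_pow]
    rw [Finset.sum_const, hcard]; simp
  set m₁ : Fin K := ⟨1, by omega⟩ with hm₁
  have hm₁z : m₁ ≠ z := by simp [hm₁, hz, Fin.ext_iff]
  have hTconst : ∀ m : Fin K, m ≠ z → T m = T m₁ := by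
    intro m hm
    have key : ∀ p : Equiv.Perm (Fin K),
        (G ((p * Equiv.swap m₁ m) z) ((p * Equiv.swap m₁ m) m₁))^2 = (G (p z) (p m))^2 := by
      intro p
      have h1 : (p * Equiv.swap m₁ m) z = p z := by
        simp [Equiv.Perm.mul_apply, Equiv.swap_apply_of_ne_of_ne (Ne.symm hm₁z) (Ne.symm hm)]
      have h2 : (p * Equiv.swap m₁ m) m₁ = p m := by
        simp [Equiv.Perm.mul_apply]
      rw [h1, h2]
    calc T m = ∑ p : Equiv.Perm (Fin K),
          (G ((p * Equiv.swap m₁ m) z) ((p * Equiv.swap m₁ m) m₁))^2 :=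
        (Finset.sum_congr rfl fun p _ => (key p).symm)
      _ = T m₁ := Equiv.sum_comp (Equiv.mulRight (Equiv.swap m₁ m))
          (fun q => (G (q z) (q m₁))^2)
  have hsumT : ∑ m ∈ Finset.univ.erase z, T m = K.factorial * (A - 1) := by
    have inner : ∀ p : Equiv.Perm (Fin K),
        ∑ m ∈ Finset.univ.erase z, (G (p z) (p m))^2 = A - 1 := by
      intro p
      have hfull : ∑ m, (G (p z) (p m))^2 = A := by
        rw [Equiv.sum_comp p (fun j => (G (p z) j)^2)]
        exact hrow _
      rw [Finset.sum_erase_eq_sub (Finset.mem_univ z), hfull]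
      have hzz : (G (p z) (p z))^2 = 1 := by rw [hGii]; norm_num
      rw [hzz]
    rw [Finset.sum_comm]
    rw [Finset.sum_congr rfl fun p _ => inner p]
    rw [Finset.sum_const, hcard]
    simp [mul_comm]
  have hTm₁ : ((K:ℝ) - 1) * T m₁ = K.factorial * (A - 1) := by
    have : ∑ m ∈ Finset.univ.erase z, T m = ((K:ℝ) - 1) * T m₁ := by
      rw [Finset.sum_congr rfl fun m hm => hTconst m (Finset.ne_of_mem_erase hm)]
      rw [Finset.sum_const, Finset.card_erase_of_mem (Finset.mem_univ z),
        Finset.card_univ, Fintype.card_fin]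
      rw [nsmul_eq_mul]
      congr 1
      have : (1:ℕ) ≤ K := by omega
      push_cast [Nat.cast_sub this]
      ring
    rw [← this, hsumT]
  have hcsum : ∑ m ∈ Finset.univ.erase z, (c m)^2 = 1 - (c z)^2 := by
    rw [Finset.sum_erase_eq_sub (Finset.mem_univ z), hc2]
  -- assemble
  have hmain : ∑ m, (c m)^2 * T m = (c z)^2 * K.factorial + (1 - (c z)^2) * T m₁ := by
    have h := Finset.sum_erase_eq_sub (s := Finset.univ) (f := fun m => (c m)^2 * T m)
      (Finset.mem_univ z)
    have h2 : ∑ m, (c m)^2 * T m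
        = (c z)^2 * T z + ∑ m ∈ Finset.univ.erase z, (c m)^2 * T m := by
      rw [h]; ring
    rw [h2, hTz]
    congr 1
    rw [Finset.sum_congr rfl fun m hm => by rw [hTconst m (Finset.ne_of_mem_erase hm)]]
    rw [← Finset.sum_mul, hcsum]
  rw [hmain]
  have hK1 : (K:ℝ) - 1 ≠ 0 := by
    have : (2:ℝ) ≤ (K:ℝ) := by exact_mod_cast hK
    linarith
  have hfact : (K.factorial : ℝ) ≠ 0 := by positivity
  have h2K : (2:ℝ) ^ K ≠ 0 := by positivity
  field_simp
  linear_combination (1 - (c z)^2) * hTm₁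
end

section
/- Let V = Σ_i σ_i v_i be a Rademacher series with vectors v_i ∈ ℝ^n and σ_i independent uniform ±1 variables. Then for every t > 0, P(‖V‖₂ > t) ≤ 2 exp(−t² / (32 E ‖V‖₂²)) = 2 exp(−t² / (32 Σ_i ‖v_i‖₂²)). -/
open scoped BigOperators
open Finset

namespace VRC

/-- double factorial `(2k-1)!!` -/
def df : ℕ → ℕ
  | 0 => 1
  | k + 1 => (2 * k + 1) * df k

lemma df_fac (k : ℕ) : 2 ^ k * k.factorial * df k = (2 * k).factorial := by
  induction k with
  | zero => simp [df]
  | succ k ih =>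
    have hfs : (2 * (k + 1)).factorial = (2 * k + 1 + 1) * ((2 * k + 1) * (2 * k).factorial) := by
      rw [show 2 * (k + 1) = (2 * k + 1) + 1 by ring, Nat.factorial_succ, Nat.factorial_succ]
    rw [df, hfs, ← ih, Nat.factorial_succ]
    ring

lemma two_pow_fac (j : ℕ) : 2 ^ j * j.factorial ≤ (2 * j).factorial := by
  induction j with
  | zero => simp
  | succ j ih =>
    have h2 : 2 * (j + 1) = (2 * j + 1) + 1 := by ring
    rw [h2, Nat.factorial_succ, Nat.factorial_succ, Nat.factorial_succ]
    calc 2 ^ (j + 1) * ((j + 1) * j.factorial)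
        = (j + 1) * 2 * (2 ^ j * j.factorial) := by ring
      _ ≤ (j + 1) * 2 * (2 * j).factorial := Nat.mul_le_mul_left _ ih
      _ ≤ (2 * j + 1 + 1) * ((2 * j + 1) * (2 * j).factorial) := by
          have : (j + 1) * 2 ≤ 2 * j + 1 + 1 := by omega
          calc (j + 1) * 2 * (2 * j).factorial ≤ (2 * j + 1 + 1) * (2 * j).factorial :=
                Nat.mul_le_mul_right _ this
            _ ≤ (2 * j + 1 + 1) * ((2 * j + 1) * (2 * j).factorial) := by
                apply Nat.mul_le_mul_left
                exact Nat.le_mul_of_pos_left _ (by omega)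

lemma key_nat {j k : ℕ} (h : j ≤ k) :
    (2 * k).choose (2 * j) * df (k - j) ≤ df k * k.choose j := by
  have hM : 0 < 2 ^ (k - j) * (k - j).factorial * ((2 * j).factorial * (2 ^ j * j.factorial)) := by
    positivity
  apply Nat.le_of_mul_le_mul_right _ hM
  have h3 : 2 ^ (k - j) * (k - j).factorial * df (k - j) = (2 * (k - j)).factorial := df_fac _
  have h4 : 2 ^ k * k.factorial * df k = (2 * k).factorial := df_fac k
  have h5 : 2 * (k - j) = 2 * k - 2 * j := by omega
  have h1 : (2 * k).choose (2 * j) * ((2 * j).factorial * (2 * k - 2 * j).factorial)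
      = (2 * k).factorial := by
    rw [← mul_assoc]; exact Nat.choose_mul_factorial_mul_factorial (by omega)
  have h2 : k.choose j * (j.factorial * (k - j).factorial) = k.factorial := by
    rw [← mul_assoc]; exact Nat.choose_mul_factorial_mul_factorial h
  have e1 : (2 * k).choose (2 * j) * df (k - j)
        * (2 ^ (k - j) * (k - j).factorial * ((2 * j).factorial * (2 ^ j * j.factorial)))
      = (2 * k).factorial * (2 ^ j * j.factorial) := by
    calc (2 * k).choose (2 * j) * df (k - j)
          * (2 ^ (k - j) * (k - j).factorial * ((2 * j).factorial * (2 ^ j * j.factorial)))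
        = (2 * k).choose (2 * j) * ((2 * j).factorial
            * (2 ^ (k - j) * (k - j).factorial * df (k - j))) * (2 ^ j * j.factorial) := by ring
      _ = (2 * k).choose (2 * j) * ((2 * j).factorial * (2 * k - 2 * j).factorial)
            * (2 ^ j * j.factorial) := by rw [h3, h5]
      _ = (2 * k).factorial * (2 ^ j * j.factorial) := by rw [h1]
  have e2 : df k * k.choose j
        * (2 ^ (k - j) * (k - j).factorial * ((2 * j).factorial * (2 ^ j * j.factorial)))
      = (2 * k).factorial * (2 * j).factorial := by
    calc df k * k.choose j
          * (2 ^ (k - j) * (k - j).factorial * ((2 * j).factorial * (2 ^ j * j.factorial)))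
        = (2 ^ (k - j) * 2 ^ j) * (k.choose j * (j.factorial * (k - j).factorial)) * df k
            * (2 * j).factorial := by ring
      _ = (2 ^ (k - j) * 2 ^ j) * k.factorial * df k * (2 * j).factorial := by rw [h2]
      _ = 2 ^ k * k.factorial * df k * (2 * j).factorial := by
          rw [show (2:ℕ) ^ (k - j) * 2 ^ j = 2 ^ k by rw [← pow_add]; congr 1; omega]
      _ = (2 * k).factorial * (2 * j).factorial := by rw [h4]
  rw [e1, e2]
  exact Nat.mul_le_mul_left _ (two_pow_fac j)

lemma df_le (k : ℕ) : df k ≤ (2 * k) ^ k := by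
  induction k with
  | zero => simp [df]
  | succ k ih =>
    rw [df]
    calc (2 * k + 1) * df k ≤ (2 * (k + 1)) * (2 * k) ^ k :=
          Nat.mul_le_mul (by omega) ih
      _ ≤ (2 * (k + 1)) * (2 * (k + 1)) ^ k :=
          Nat.mul_le_mul_left _ (Nat.pow_le_pow_left (by omega) _)
      _ = (2 * (k + 1)) ^ (k + 1) := by ring

/-- monotonicity of `(a+b)^n + (a-b)^n` in `b ≥ 0`, for `a ≥ 0` -/
lemma pow_pair_mono {a b c : ℝ} (ha : 0 ≤ a) (hb : 0 ≤ b) (hbc : b ≤ c) (n : ℕ) :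
    (a + b) ^ n + (a - b) ^ n ≤ (a + c) ^ n + (a - c) ^ n := by
  have expand : ∀ x : ℝ, (a + x) ^ n + (a - x) ^ n
      = ∑ i ∈ range (n + 1), a ^ i * (x ^ (n - i) + (-x) ^ (n - i)) * (n.choose i : ℝ) := by
    intro x
    rw [show a - x = a + (-x) by ring, add_pow, add_pow, ← Finset.sum_add_distrib]
    apply Finset.sum_congr rfl; intro i _; ring
  rw [expand b, expand c]
  apply Finset.sum_le_sum
  intro i _
  rcases Nat.even_or_odd (n - i) with he | ho
  · rw [he.neg_pow b, he.neg_pow c]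
    have h1 : b ^ (n - i) ≤ c ^ (n - i) := pow_le_pow_left₀ hb hbc _
    have hcoef : (0:ℝ) ≤ (n.choose i : ℝ) := by positivity
    have hai : (0:ℝ) ≤ a ^ i := by positivity
    nlinarith [mul_le_mul_of_nonneg_right (mul_le_mul_of_nonneg_left h1 hai) hcoef]
  · rw [ho.neg_pow b, ho.neg_pow c]
    simp

/-- sum over even indices -/
lemma sum_even_terms (g : ℕ → ℝ) (k : ℕ) (hodd : ∀ i, Odd i → g i = 0) :
    ∑ i ∈ range (2 * k + 1), g i = ∑ j ∈ range (k + 1), g (2 * j) := by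
  induction k with
  | zero => simp
  | succ k ih =>
    rw [show 2 * (k + 1) + 1 = (2 * k + 1) + 1 + 1 by ring, Finset.sum_range_succ,
      Finset.sum_range_succ, ih, hodd (2 * k + 1) ⟨k, by ring⟩, add_zero,
      show 2 * k + 1 + 1 = 2 * (k + 1) by ring, ← Finset.sum_range_succ]

/-- even binomial expansion -/
lemma even_binom (x y : ℝ) (k : ℕ) :
    (x + y) ^ (2 * k) + (x - y) ^ (2 * k)
      = ∑ j ∈ range (k + 1),
          2 * ((2 * k).choose (2 * j) : ℝ) * x ^ (2 * j) * y ^ (2 * (k - j)) := by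
  have expand : (x + y) ^ (2 * k) + (x - y) ^ (2 * k)
      = ∑ i ∈ range (2 * k + 1),
          x ^ i * (y ^ (2 * k - i) + (-y) ^ (2 * k - i)) * ((2 * k).choose i : ℝ) := by
    rw [show x - y = x + (-y) by ring, add_pow, add_pow, ← Finset.sum_add_distrib]
    apply Finset.sum_congr rfl; intro i _; ring
  rw [expand, sum_even_terms _ k]
  · apply Finset.sum_congr rfl
    intro j hj
    have hjk : j ≤ k := Nat.lt_succ_iff.mp (Finset.mem_range.mp hj)
    have hsub : 2 * k - 2 * j = 2 * (k - j) := by omega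
    rw [hsub, (even_two_mul (k - j)).neg_pow y]
    ring
  · intro i hi
    rcases lt_or_ge (2 * k) i with hlt | hle
    · rw [Nat.choose_eq_zero_of_lt hlt]; simp
    · have hoddsub : Odd (2 * k - i) := by
        obtain ⟨l, hl⟩ := hi; exact ⟨k - l - 1, by omega⟩
      rw [hoddsub.neg_pow]; ring

variable {E : Type*} [NormedAddCommGroup E] [InnerProductSpace ℝ E]

lemma pair_bound (W u : E) (k : ℕ) :
    ‖W + u‖ ^ (2 * k) + ‖W - u‖ ^ (2 * k)
      ≤ (‖u‖ + ‖W‖) ^ (2 * k) + (‖u‖ - ‖W‖) ^ (2 * k) := by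
  have ha : (0:ℝ) ≤ ‖W‖ ^ 2 + ‖u‖ ^ 2 := by positivity
  set a : ℝ := ‖W‖ ^ 2 + ‖u‖ ^ 2 with hadef
  set c : ℝ := 2 * inner ℝ W u with hcdef
  have h1 : ‖W + u‖ ^ (2 * k) = (a + c) ^ k := by
    rw [pow_mul, norm_add_sq_real]; congr 1; rw [hadef, hcdef]; ring
  have h2 : ‖W - u‖ ^ (2 * k) = (a - c) ^ k := by
    rw [pow_mul, norm_sub_sq_real]; congr 1; rw [hadef, hcdef]; ring
  have habs : (a + c) ^ k + (a - c) ^ k = (a + |c|) ^ k + (a - |c|) ^ k := by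
    rcases abs_cases c with ⟨h, _⟩ | ⟨h, _⟩
    · rw [h]
    · rw [h]; ring
  have hcs : |c| ≤ 2 * (‖W‖ * ‖u‖) := by
    rw [hcdef, abs_mul, abs_two]
    have := abs_real_inner_le_norm W u
    nlinarith
  have hmono := pow_pair_mono ha (abs_nonneg c) hcs k
  have h3 : (a + 2 * (‖W‖ * ‖u‖)) ^ k = (‖u‖ + ‖W‖) ^ (2 * k) := by
    rw [pow_mul]; congr 1; rw [hadef]; ring
  have h4 : (a - 2 * (‖W‖ * ‖u‖)) ^ k = (‖u‖ - ‖W‖) ^ (2 * k) := by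
    rw [pow_mul]; congr 1; rw [hadef]; ring
  rw [h1, h2, habs, ← h3, ← h4]
  exact hmono

def sgn (b : Bool) : ℝ := if b then 1 else -1

lemma reindex (m : ℕ) (f : (Fin (m + 1) → Bool) → ℝ) :
    ∑ σ : Fin (m + 1) → Bool, f σ
      = ∑ σ : Fin m → Bool, (f (Fin.cons true σ) + f (Fin.cons false σ)) := by
  rw [Fintype.sum_equiv (Fin.consEquiv fun _ => Bool).symm f
    (fun p => f (Fin.cons p.1 p.2)) (fun σ => by simp [Fin.consEquiv, Fin.cons_self_tail])]
  rw [Fintype.sum_prod_type_right]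
  apply Finset.sum_congr rfl
  intro σ _
  rw [Fintype.sum_bool]

lemma cons_sum (m : ℕ) (v : Fin (m + 1) → E) (b : Bool) (σ : Fin m → Bool) :
    ∑ i, sgn ((Fin.cons b σ : Fin (m + 1) → Bool) i) • v i
      = sgn b • v 0 + ∑ i : Fin m, sgn (σ i) • v i.succ := by
  rw [Fin.sum_univ_succ]
  simp [Fin.cons_succ, Fin.cons_zero]

lemma moment_bound (m : ℕ) : ∀ (v : Fin m → E) (k : ℕ),
    ∑ σ : Fin m → Bool, ‖∑ i, sgn (σ i) • v i‖ ^ (2 * k)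
      ≤ 2 ^ m * df k * (∑ i, ‖v i‖ ^ 2) ^ k := by
  induction m with
  | zero =>
    intro v k
    cases k with
    | zero => simp [df]
    | succ k => simp
  | succ m ih =>
    intro v k
    set u : E := v 0 with hu
    set vt : Fin m → E := fun i => v i.succ with hvt
    set T : ℝ := ∑ i : Fin m, ‖vt i‖ ^ 2 with hT
    have hT0 : 0 ≤ T := by positivity
    set x : ℝ := ‖u‖ with hx
    have hx0 : 0 ≤ x := norm_nonneg u
    set W : (Fin m → Bool) → E := fun σ => ∑ i, sgn (σ i) • vt i with hW
    have step1 : ∑ σ : Fin (m + 1) → Bool, ‖∑ i, sgn (σ i) • v i‖ ^ (2 * k)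
        = ∑ σ : Fin m → Bool, (‖W σ + u‖ ^ (2 * k) + ‖W σ - u‖ ^ (2 * k)) := by
      rw [reindex m]
      apply Finset.sum_congr rfl
      intro σ _
      rw [cons_sum, cons_sum]
      have h1 : sgn true • v 0 + ∑ i : Fin m, sgn (σ i) • v i.succ = W σ + u := by
        simp [sgn, hW, hu, hvt, add_comm]
      have h2 : sgn false • v 0 + ∑ i : Fin m, sgn (σ i) • v i.succ = W σ - u := by
        simp [sgn, hW, hu, hvt, neg_add_eq_sub]
      rw [h1, h2]
    rw [step1]
    calc ∑ σ : Fin m → Bool, (‖W σ + u‖ ^ (2 * k) + ‖W σ - u‖ ^ (2 * k))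
        ≤ ∑ σ : Fin m → Bool, ((x + ‖W σ‖) ^ (2 * k) + (x - ‖W σ‖) ^ (2 * k)) :=
          Finset.sum_le_sum fun σ _ => pair_bound (W σ) u k
      _ = ∑ σ : Fin m → Bool, ∑ j ∈ range (k + 1),
            2 * ((2 * k).choose (2 * j) : ℝ) * x ^ (2 * j) * ‖W σ‖ ^ (2 * (k - j)) :=
          Finset.sum_congr rfl fun σ _ => even_binom x ‖W σ‖ k
      _ = ∑ j ∈ range (k + 1), 2 * ((2 * k).choose (2 * j) : ℝ) * x ^ (2 * j)
            * (∑ σ : Fin m → Bool, ‖W σ‖ ^ (2 * (k - j))) := by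
          rw [Finset.sum_comm]
          exact Finset.sum_congr rfl fun j _ => by rw [Finset.mul_sum]
      _ ≤ ∑ j ∈ range (k + 1), 2 * ((2 * k).choose (2 * j) : ℝ) * x ^ (2 * j)
            * (2 ^ m * df (k - j) * T ^ (k - j)) := by
          apply Finset.sum_le_sum
          intro j _
          apply mul_le_mul_of_nonneg_left (ih vt (k - j)) (by positivity)
      _ ≤ ∑ j ∈ range (k + 1), 2 ^ (m + 1) * (df k : ℝ)
            * ((k.choose j : ℝ) * (x ^ 2) ^ j * T ^ (k - j)) := by
          apply Finset.sum_le_sum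
          intro j hj
          have hjk : j ≤ k := Nat.lt_succ_iff.mp (Finset.mem_range.mp hj)
          have hkey : ((2 * k).choose (2 * j) * df (k - j) : ℝ) ≤ (df k * k.choose j : ℝ) := by
            exact_mod_cast Nat.cast_le.mpr (key_nat hjk)
          have hnn : (0:ℝ) ≤ 2 ^ (m + 1) * (x ^ 2) ^ j * T ^ (k - j) := by positivity
          have hmm := mul_le_mul_of_nonneg_left hkey hnn
          calc 2 * ((2 * k).choose (2 * j) : ℝ) * x ^ (2 * j) * (2 ^ m * df (k - j) * T ^ (k - j))
              = 2 ^ (m + 1) * (x ^ 2) ^ j * T ^ (k - j)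
                * (((2 * k).choose (2 * j) : ℝ) * df (k - j)) := by
                rw [pow_mul]; push_cast; ring
            _ ≤ 2 ^ (m + 1) * (x ^ 2) ^ j * T ^ (k - j) * ((df k : ℝ) * (k.choose j : ℝ)) := by
                exact_mod_cast hmm
            _ = 2 ^ (m + 1) * (df k : ℝ) * ((k.choose j : ℝ) * (x ^ 2) ^ j * T ^ (k - j)) := by
                ring
      _ = 2 ^ (m + 1) * (df k : ℝ) * (x ^ 2 + T) ^ k := by
          rw [← Finset.mul_sum, add_pow]
          congr 1
          exact Finset.sum_congr rfl fun j _ => by ring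
      _ = 2 ^ (m + 1) * df k * (∑ i : Fin (m + 1), ‖v i‖ ^ 2) ^ k := by
          rw [Fin.sum_univ_succ]

lemma sq_identity (m : ℕ) : ∀ v : Fin m → E,
    ∑ σ : Fin m → Bool, ‖∑ i, sgn (σ i) • v i‖ ^ 2 = 2 ^ m * ∑ i, ‖v i‖ ^ 2 := by
  induction m with
  | zero => intro v; simp
  | succ m ih =>
    intro v
    set u : E := v 0 with hu
    set vt : Fin m → E := fun i => v i.succ with hvt
    set W : (Fin m → Bool) → E := fun σ => ∑ i, sgn (σ i) • vt i with hW
    have step1 : ∑ σ : Fin (m + 1) → Bool, ‖∑ i, sgn (σ i) • v i‖ ^ 2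
        = ∑ σ : Fin m → Bool, (‖W σ + u‖ ^ 2 + ‖W σ - u‖ ^ 2) := by
      rw [reindex m]
      apply Finset.sum_congr rfl
      intro σ _
      rw [cons_sum, cons_sum]
      have h1 : sgn true • v 0 + ∑ i : Fin m, sgn (σ i) • v i.succ = W σ + u := by
        simp [sgn, hW, hu, hvt, add_comm]
      have h2 : sgn false • v 0 + ∑ i : Fin m, sgn (σ i) • v i.succ = W σ - u := by
        simp [sgn, hW, hu, hvt, neg_add_eq_sub]
      rw [h1, h2]
    rw [step1]
    have par : ∀ σ : Fin m → Bool, ‖W σ + u‖ ^ 2 + ‖W σ - u‖ ^ 2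
        = 2 * ‖W σ‖ ^ 2 + 2 * ‖u‖ ^ 2 := by
      intro σ
      rw [norm_add_sq_real, norm_sub_sq_real]
      ring
    rw [Finset.sum_congr rfl fun σ _ => par σ, Finset.sum_add_distrib, ← Finset.mul_sum,
      ih vt, Finset.sum_const, Fin.sum_univ_succ]
    have hcard : (Finset.univ : Finset (Fin m → Bool)).card = 2 ^ m := by
      simp [Fintype.card_fun]
    rw [hcard]
    push_cast
    ring

end VRC

/-- vector-valued Hoeffding-type inequality for Rademacher series,
together with the identity `E‖V‖² = Σ_i ‖v_i‖²`. -/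
theorem vector_rademacher_concentration {n m : ℕ}
    (v : Fin m → EuclideanSpace ℝ (Fin n)) (t : ℝ) (ht : 0 < t) :
    ((∑ σ : Fin m → Bool, ‖∑ i, (if σ i then (1 : ℝ) else -1) • v i‖ ^ 2) / 2 ^ m
        = ∑ i, ‖v i‖ ^ 2) ∧
    ((Finset.univ.filter fun σ : Fin m → Bool =>
        t < ‖∑ i, (if σ i then (1 : ℝ) else -1) • v i‖).card : ℝ) / 2 ^ m
      ≤ 2 * Real.exp (-t ^ 2 / (32 * ∑ i, ‖v i‖ ^ 2)) := by
  set S : ℝ := ∑ i, ‖v i‖ ^ 2 with hS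
  have hS0 : 0 ≤ S := by positivity
  have hid := VRC.sq_identity m v
  simp only [VRC.sgn] at hid
  constructor
  · rw [hid]
    field_simp
    exact hS.symm
  · set N := (Finset.univ.filter fun σ : Fin m → Bool =>
      t < ‖∑ i, (if σ i then (1 : ℝ) else -1) • v i‖).card with hN
    have hNle : (N : ℝ) ≤ 2 ^ m := by
      have h1 : N ≤ Fintype.card (Fin m → Bool) := by
        rw [hN, ← Finset.card_univ]
        exact Finset.card_filter_le _ _
      have h2 : Fintype.card (Fin m → Bool) = 2 ^ m := by simp [Fintype.card_fun]
      calc (N : ℝ) ≤ (Fintype.card (Fin m → Bool) : ℝ) := by exact_mod_cast h1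
        _ = 2 ^ m := by rw [h2]; push_cast; ring
    have hP1 : (N : ℝ) / 2 ^ m ≤ 1 := by
      rw [div_le_one (by positivity)]
      exact hNle
    rcases le_or_gt 1 (2 * Real.exp (-t ^ 2 / (32 * S))) with hcase | hcase
    · exact hP1.trans hcase
    · have hSne : S ≠ 0 := by
        intro h
        rw [h] at hcase
        norm_num at hcase
      have hSpos : 0 < S := lt_of_le_of_ne hS0 (Ne.symm hSne)
      set u : ℝ := t ^ 2 / S with hu
      have hupos : 0 < u := div_pos (by positivity) hSpos
      have hrw : -t ^ 2 / (32 * S) = -(u / 32) := by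
        rw [hu]; field_simp
      have hexp_half : Real.exp (-(u / 32)) < 1 / 2 := by
        rw [← hrw]; linarith
      have hlog : Real.log 2 < u / 32 := by
        have h3 : -(u / 32) < Real.log (1 / 2) :=
          (Real.lt_log_iff_exp_lt (by norm_num)).mpr hexp_half
        rw [one_div, Real.log_inv] at h3
        linarith
      have hlog2 : (0.6931471803 : ℝ) < Real.log 2 := Real.log_two_gt_d9
      have hu22 : 22 < u := by nlinarith
      set k : ℕ := Nat.ceil (u / 32) with hk
      have hk1 : u / 32 ≤ (k : ℝ) := Nat.le_ceil _
      have hk2 : (k : ℝ) < u / 32 + 1 := Nat.ceil_lt_add_one (by positivity)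
      -- Markov
      have hmb := VRC.moment_bound m v k
      simp only [VRC.sgn] at hmb
      have markov : (N : ℝ) * t ^ (2 * k)
          ≤ ∑ σ : Fin m → Bool, ‖∑ i, (if σ i then (1 : ℝ) else -1) • v i‖ ^ (2 * k) := by
        calc (N : ℝ) * t ^ (2 * k)
            = ∑ _σ ∈ (Finset.univ.filter fun σ : Fin m → Bool =>
                t < ‖∑ i, (if σ i then (1 : ℝ) else -1) • v i‖), t ^ (2 * k) := by
              rw [Finset.sum_const, hN, nsmul_eq_mul]
          _ ≤ ∑ σ ∈ (Finset.univ.filter fun σ : Fin m → Bool =>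
                t < ‖∑ i, (if σ i then (1 : ℝ) else -1) • v i‖),
                ‖∑ i, (if σ i then (1 : ℝ) else -1) • v i‖ ^ (2 * k) := by
              apply Finset.sum_le_sum
              intro σ hσ
              have := (Finset.mem_filter.mp hσ).2
              exact pow_le_pow_left₀ ht.le this.le _
          _ ≤ ∑ σ : Fin m → Bool, ‖∑ i, (if σ i then (1 : ℝ) else -1) • v i‖ ^ (2 * k) := by
              apply Finset.sum_le_sum_of_subset_of_nonneg (Finset.filter_subset _ _)
              intro σ _ _
              positivity
      have hNb : (N : ℝ) / 2 ^ m ≤ (VRC.df k : ℝ) * S ^ k / t ^ (2 * k) := by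
        rw [div_le_div_iff₀ (by positivity) (by positivity)]
        calc (N : ℝ) * t ^ (2 * k)
            ≤ ∑ σ : Fin m → Bool, ‖∑ i, (if σ i then (1 : ℝ) else -1) • v i‖ ^ (2 * k) := markov
          _ ≤ 2 ^ m * (VRC.df k : ℝ) * S ^ k := hmb
          _ = (VRC.df k : ℝ) * S ^ k * 2 ^ m := by ring
      have hdf : (VRC.df k : ℝ) ≤ (2 * (k : ℝ)) ^ k := by
        have := VRC.df_le k
        calc (VRC.df k : ℝ) ≤ ((2 * k) ^ k : ℕ) := by exact_mod_cast this
          _ = (2 * (k : ℝ)) ^ k := by push_cast; ring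
      have hchain : (VRC.df k : ℝ) * S ^ k / t ^ (2 * k) ≤ (2 * (k : ℝ) / u) ^ k := by
        have heq : (2 * (k : ℝ) / u) ^ k = (2 * (k : ℝ)) ^ k * S ^ k / t ^ (2 * k) := by
          have h1 : 2 * (k : ℝ) / u = 2 * (k : ℝ) * S / t ^ 2 := by
            rw [hu]; field_simp
          rw [h1, div_pow, mul_pow, ← pow_mul]
        rw [heq]
        gcongr
      have he1 : Real.exp 1 < 2.7182818286 := Real.exp_one_lt_d9
      have hepos : (0:ℝ) < Real.exp 1 := Real.exp_pos 1
      have h2k : 2 * (k : ℝ) ≤ u / 16 + 2 := by linarith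
      have hke : 2 * (k : ℝ) * Real.exp 1 ≤ u := by
        have ha : 2 * (k : ℝ) * Real.exp 1 ≤ (u / 16 + 2) * Real.exp 1 :=
          mul_le_mul_of_nonneg_right h2k hepos.le
        have hb : (u / 16 + 2) * Real.exp 1 ≤ (u / 16 + 2) * 2.7182818286 := by
          apply mul_le_mul_of_nonneg_left he1.le
          linarith
        linarith
      have hfrac : 2 * (k : ℝ) / u ≤ (Real.exp 1)⁻¹ := by
        rw [inv_eq_one_div, div_le_div_iff₀ hupos hepos]
        linarith
      have hexpb : (2 * (k : ℝ) / u) ^ k ≤ Real.exp (-(u / 32)) := by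
        calc (2 * (k : ℝ) / u) ^ k ≤ ((Real.exp 1)⁻¹) ^ k :=
              pow_le_pow_left₀ (by positivity) hfrac k
          _ = Real.exp (-(k : ℝ)) := by
              rw [← Real.exp_neg, ← Real.exp_nat_mul]
              congr 1
              ring
          _ ≤ Real.exp (-(u / 32)) := Real.exp_le_exp.mpr (by linarith)
      have hfinal : (N : ℝ) / 2 ^ m ≤ Real.exp (-t ^ 2 / (32 * S)) := by
        rw [hrw]
        exact hNb.trans (hchain.trans hexpb)
      have := Real.exp_pos (-t ^ 2 / (32 * S))
      linarith
end

section
/- Fix i ∈ {1,…,K} and S ≤ K. For a uniformly random permutation p of {1,…,K}, a uniformly random sign sequence σ, a nonnegative nonincreasing sequence c with ‖c‖₂ = 1, and I_p = p⁻¹({1,…,S}), and for arbitrary d×K matrices Ψ (with any S of its columns linearly independent) and Φ with unit-norm columns, one has E_p E_σ ‖P_{I_p}(Ψ) Φ c_{p,σ}‖₂² = ((1−γ²)/(K−S)) · C(K,S)⁻¹ Σ_{|J|=S} ‖P_J(Ψ) Φ‖_F² + (γ²/S − (1−γ²)/(K−S)) · C(K,S)⁻¹ Σ_{|J|=S} ‖P_J(Ψ)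 Φ_J‖_F², where γ² = c₁² + … + c_S². -/
open scoped RealInnerProductSpace BigOperators

open Finset

section Helpers

lemma sign_orth {K : ℕ} (j j' : Fin K) :
    ∑ σ : Fin K → Bool, (if σ j then (1:ℝ) else -1) * (if σ j' then (1:ℝ) else -1)
      = if j = j' then (2:ℝ)^K else 0 := by
  by_cases h : j = j'
  · subst h
    simp only [if_pos rfl]
    have : ∀ σ : Fin K → Bool, (if σ j then (1:ℝ) else -1) * (if σ j then (1:ℝ) else -1) = 1 := by
      intro σ; by_cases hσ : σ j <;> simp [hσ]
    rw [Finset.sum_congr rfl (fun σ _ => this σ), Finset.sum_const, Finset.card_univ]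
    simp [Fintype.card_fun]
  · rw [if_neg h]
    apply Finset.sum_ninvolution (fun σ => Function.update σ j (!σ j))
    · intro σ
      rw [Function.update_of_ne (Ne.symm h), Function.update_self]
      by_cases hσ : σ j <;> by_cases hσ' : σ j' <;> simp [hσ, hσ']
    · intro σ _
      intro hc
      have := congrFun hc j
      rw [Function.update_self] at this
      exact (Bool.not_ne_self _) this
    · intro σ; exact Finset.mem_univ _
    · intro σ
      funext x
      by_cases hx : x = j
      · subst hx; simp
      · simp [Function.update_of_ne hx]

lemma sign_sum_sq {K : ℕ} {E : Type*} [NormedAddCommGroup E] [InnerProductSpace ℝ E]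
    (v : Fin K → E) :
    ∑ σ : Fin K → Bool, ‖∑ j, (if σ j then (1:ℝ) else -1) • v j‖ ^ 2
      = 2 ^ K * ∑ j, ‖v j‖ ^ 2 := by
  have expand : ∀ σ : Fin K → Bool,
      ‖∑ j, (if σ j then (1:ℝ) else -1) • v j‖ ^ 2
        = ∑ j, ∑ j', ((if σ j then (1:ℝ) else -1) * (if σ j' then (1:ℝ) else -1))
            * inner ℝ (v j) (v j') := by
    intro σ
    rw [← real_inner_self_eq_norm_sq, sum_inner]
    refine Finset.sum_congr rfl fun j _ => ?_
    rw [inner_sum]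
    refine Finset.sum_congr rfl fun j' _ => ?_
    rw [real_inner_smul_left, real_inner_smul_right]; ring
  simp_rw [expand]
  rw [Finset.sum_comm]
  have : ∀ j : Fin K, ∑ σ : Fin K → Bool, ∑ j',
      ((if σ j then (1:ℝ) else -1) * (if σ j' then (1:ℝ) else -1)) * inner ℝ (v j) (v j')
      = (2:ℝ)^K * ‖v j‖^2 := by
    intro j
    rw [Finset.sum_comm]
    have : ∀ j' : Fin K, ∑ σ : Fin K → Bool,
        ((if σ j then (1:ℝ) else -1) * (if σ j' then (1:ℝ) else -1)) * inner ℝ (v j) (v j')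
        = (if j = j' then (2:ℝ)^K else 0) * inner ℝ (v j) (v j') := by
      intro j'
      rw [← Finset.sum_mul, sign_orth]
    simp_rw [this]
    simp only [ite_mul, zero_mul]
    rw [Finset.sum_ite_eq]
    simp [real_inner_self_eq_norm_sq]
  simp_rw [this, ← Finset.mul_sum]

variable {K S : ℕ}

lemma exists_perm_map (J J' : Finset (Fin K)) (h : J'.card = J.card) :
    ∃ e : Equiv.Perm (Fin K), ∀ x, x ∈ J' ↔ e x ∈ J := by
  classical
  have h1 : Fintype.card {x // x ∈ J'} = Fintype.card {x // x ∈ J} := by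
    simp [Fintype.card_coe, h]
  have h2 : Fintype.card {x // ¬ x ∈ J'} = Fintype.card {x // ¬ x ∈ J} := by
    rw [Fintype.card_subtype_compl, Fintype.card_subtype_compl, Fintype.card_coe,
      Fintype.card_coe, h]
  obtain ⟨e1⟩ := Fintype.card_eq.mp h1
  obtain ⟨e2⟩ := Fintype.card_eq.mp h2
  refine ⟨(Equiv.sumCompl (· ∈ J')).symm.trans ((Equiv.sumCongr e1 e2).trans
    (Equiv.sumCompl (· ∈ J))), fun x => ?_⟩
  by_cases hx : x ∈ J'
  · simp only [Equiv.trans_apply, Equiv.sumCompl_symm_apply_of_pos (p := (· ∈ J')) hx,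
      Equiv.sumCongr_apply, Sum.map_inl, Equiv.sumCompl_apply_inl]
    exact ⟨fun _ => (e1 ⟨x, hx⟩).2, fun _ => hx⟩
  · simp only [Equiv.trans_apply, Equiv.sumCompl_symm_apply_of_neg (p := (· ∈ J')) hx,
      Equiv.sumCongr_apply, Sum.map_inr, Equiv.sumCompl_apply_inr]
    exact ⟨fun hc => absurd hc hx, fun hc => absurd hc (e2 ⟨x, hx⟩).2⟩

lemma swap_lt_iff {i i' y : Fin K} (h : ((i:ℕ) < S ↔ (i':ℕ) < S)) :
    ((Equiv.swap i i' y : Fin K) : ℕ) < S ↔ (y : ℕ) < S := by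
  rcases eq_or_ne y i with rfl | hyi
  · rw [Equiv.swap_apply_left]; exact h.symm
  rcases eq_or_ne y i' with rfl | hyi'
  · rw [Equiv.swap_apply_right]; exact h
  · rw [Equiv.swap_apply_of_ne_of_ne hyi hyi']

lemma M_const (J : Finset (Fin K)) (j i i' : Fin K) (hii : ((i:ℕ) < S ↔ (i':ℕ) < S)) :
    ((univ.filter fun p : Equiv.Perm (Fin K) =>
        (univ.filter fun x => ((p x : ℕ) < S)) = J ∧ p j = i)).card
    = ((univ.filter fun p : Equiv.Perm (Fin K) =>
        (univ.filter fun x => ((p x : ℕ) < S)) = J ∧ p j = i')).card := by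
  classical
  apply Finset.card_equiv (Equiv.mulLeft (Equiv.swap i i'))
  intro p
  simp only [mem_filter, mem_univ, true_and, Equiv.coe_mulLeft, Equiv.Perm.mul_apply]
  constructor
  · rintro ⟨h1, h2⟩
    refine ⟨?_, by rw [h2, Equiv.swap_apply_left]⟩
    rw [← h1]; ext x
    simp only [mem_filter, mem_univ, true_and]
    exact (Finset.mem_filter.trans (and_iff_right (mem_univ _))).trans (swap_lt_iff hii)
  · rintro ⟨h1, h2⟩
    have h2' : p j = i := by
      have := congrArg (Equiv.swap i i') h2
      rwa [Equiv.swap_apply_self, Equiv.swap_apply_right] at this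
    refine ⟨?_, h2'⟩
    rw [← h1]; ext x
    simp only [mem_filter, mem_univ, true_and]
    refine Iff.symm ?_
    exact (Finset.mem_filter.trans (and_iff_right (mem_univ _))).trans (swap_lt_iff hii)

lemma N_const (J J' : Finset (Fin K)) (h : J'.card = J.card) :
    ((univ.filter fun p : Equiv.Perm (Fin K) =>
        (univ.filter fun x => ((p x : ℕ) < S)) = J)).card
    = ((univ.filter fun p : Equiv.Perm (Fin K) =>
        (univ.filter fun x => ((p x : ℕ) < S)) = J')).card := by
  classical
  obtain ⟨e, he⟩ := exists_perm_map J J' h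
  apply Finset.card_equiv (Equiv.mulRight e)
  intro p
  simp only [mem_filter, mem_univ, true_and, Equiv.coe_mulRight, Equiv.Perm.mul_apply]
  constructor
  · intro h1
    ext x
    refine (Finset.mem_filter.trans (and_iff_right (mem_univ _))).trans ?_
    rw [he x, ← h1]
    simp
  · intro h1
    ext x
    simp only [mem_filter, mem_univ, true_and]
    have hx : x ∈ J ↔ e.symm x ∈ J' := by
      rw [he (e.symm x), Equiv.apply_symm_apply]
    rw [hx, ← h1]
    exact ((Finset.mem_filter.trans (and_iff_right (mem_univ _))).trans (by simp)).symm

lemma card_T0 (h : S ≤ K) : (univ.filter fun i : Fin K => (i:ℕ) < S).card = S := by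
  have : (univ.filter fun i : Fin K => (i:ℕ) < S) =
      (univ : Finset (Fin S)).map (Fin.castLEEmb h) := by
    ext x
    simp only [mem_filter, mem_univ, true_and, mem_map]
    constructor
    · intro hx; exact ⟨⟨x, hx⟩, by ext; simp⟩
    · rintro ⟨a, rfl⟩; simp
  rw [this, card_map, card_univ, Fintype.card_fin]

lemma card_T0c (h : S ≤ K) : (univ.filter fun i : Fin K => ¬ (i:ℕ) < S).card = K - S := by
  have := Finset.card_filter_add_card_filter_not (s := (univ : Finset (Fin K)))
    (p := fun i : Fin K => (i:ℕ) < S)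
  rw [card_T0 h, card_univ, Fintype.card_fin] at this
  omega

lemma Jp_mem (hSK : S ≤ K) (p : Equiv.Perm (Fin K)) :
    (univ.filter fun x : Fin K => ((p x : ℕ) < S)) ∈
      (univ.filter fun J : Finset (Fin K) => J.card = S) := by
  simp only [mem_filter, mem_univ, true_and]
  rw [show (univ.filter fun x : Fin K => ((p x : ℕ) < S)).card
      = (univ.filter fun i : Fin K => (i:ℕ) < S).card from
    Finset.card_equiv p (fun x => by simp), card_T0 hSK]

lemma cardA : (univ.filter fun J : Finset (Fin K) => J.card = S).card = K.choose S := by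
  have : (univ.filter fun J : Finset (Fin K) => J.card = S)
      = Finset.powersetCard S (univ : Finset (Fin K)) := by
    ext J
    simp [Finset.mem_powersetCard_univ]
  rw [this, Finset.card_powersetCard, card_univ, Fintype.card_fin]

lemma N_choose (hSK : S ≤ K) (J : Finset (Fin K)) (hJ : J.card = S) :
    K.choose S * ((univ.filter fun p : Equiv.Perm (Fin K) =>
        (univ.filter fun x => ((p x : ℕ) < S)) = J)).card = K.factorial := by
  classical
  have h1 : (univ : Finset (Equiv.Perm (Fin K))).card
      = ∑ J' ∈ (univ.filter fun J : Finset (Fin K) => J.card = S),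
          ((univ.filter fun p : Equiv.Perm (Fin K) =>
            (univ.filter fun x => ((p x : ℕ) < S)) = J')).card :=
    Finset.card_eq_sum_card_fiberwise (fun p _ => Jp_mem hSK p)
  have h2 : ∀ J' ∈ (univ.filter fun J : Finset (Fin K) => J.card = S),
      ((univ.filter fun p : Equiv.Perm (Fin K) =>
        (univ.filter fun x => ((p x : ℕ) < S)) = J')).card
      = ((univ.filter fun p : Equiv.Perm (Fin K) =>
        (univ.filter fun x => ((p x : ℕ) < S)) = J)).card := by
    intro J' hJ'
    simp only [mem_filter, mem_univ, true_and] at hJ'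
    exact N_const (S := S) J' J (by rw [hJ, hJ'])
  rw [Finset.sum_congr rfl h2, Finset.sum_const, cardA, smul_eq_mul] at h1
  rw [← h1, card_univ, Fintype.card_perm, Fintype.card_fin]

lemma key_in (hS : 0 < S) (hSK : S < K) (c : Fin K → ℝ) (J : Finset (Fin K)) (j : Fin K)
    (hj : j ∈ J) :
    (S : ℝ) * ∑ p ∈ (univ.filter fun p : Equiv.Perm (Fin K) =>
        (univ.filter fun x => ((p x : ℕ) < S)) = J), (c (p j))^2
    = (∑ i ∈ univ.filter (fun i : Fin K => (i:ℕ) < S), (c i)^2) *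
      ((univ.filter fun p : Equiv.Perm (Fin K) =>
        (univ.filter fun x => ((p x : ℕ) < S)) = J)).card := by
  classical
  have hK : 0 < K := hS.trans hSK
  set F := (univ.filter fun p : Equiv.Perm (Fin K) =>
      (univ.filter fun x => ((p x : ℕ) < S)) = J) with hF
  have hmap : ∀ p ∈ F, p j ∈ univ.filter (fun i : Fin K => (i:ℕ) < S) := by
    intro p hp
    simp only [hF, mem_filter, mem_univ, true_and] at hp
    rw [← hp] at hj
    simp only [mem_filter, mem_univ, true_and] at hj ⊢
    exact hj
  set i₀ : Fin K := ⟨0, hK⟩ with hi₀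
  set M : ℕ := ((univ.filter fun p : Equiv.Perm (Fin K) =>
      (univ.filter fun x => ((p x : ℕ) < S)) = J ∧ p j = i₀)).card with hM
  have hfib : ∀ i ∈ univ.filter (fun i : Fin K => (i:ℕ) < S),
      ∑ p ∈ F.filter (fun p => p j = i), (c (p j))^2 = M * (c i)^2 := by
    intro i hi
    simp only [mem_filter, mem_univ, true_and] at hi
    have h1 : ∑ p ∈ F.filter (fun p => p j = i), (c (p j))^2
        = (F.filter (fun p => p j = i)).card * (c i)^2 := by
      rw [Finset.sum_congr rfl (fun p hp => by
        simp only [mem_filter] at hp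
        rw [hp.2]), Finset.sum_const, nsmul_eq_mul]
    rw [h1, hF, Finset.filter_filter]
    rw [M_const J j i i₀ ⟨fun _ => hS, fun _ => hi⟩]
  have hsplit : ∑ p ∈ F, (c (p j))^2
      = ∑ i ∈ univ.filter (fun i : Fin K => (i:ℕ) < S),
          ∑ p ∈ F.filter (fun p => p j = i), (c (p j))^2 :=
    (Finset.sum_fiberwise_of_maps_to hmap _).symm
  have hcard : F.card = S * M := by
    rw [Finset.card_eq_sum_card_fiberwise hmap]
    have : ∀ i ∈ univ.filter (fun i : Fin K => (i:ℕ) < S),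
        (F.filter (fun p => p j = i)).card = M := by
      intro i hi
      simp only [mem_filter, mem_univ, true_and] at hi
      rw [hF, Finset.filter_filter]
      exact M_const J j i i₀ ⟨fun _ => hS, fun _ => hi⟩
    rw [Finset.sum_congr rfl this, Finset.sum_const, card_T0 hSK.le, smul_eq_mul]
  rw [hsplit, Finset.sum_congr rfl hfib, hcard, ← Finset.mul_sum]
  push_cast
  ring

lemma key_out (hS : 0 < S) (hSK : S < K) (c : Fin K → ℝ) (J : Finset (Fin K)) (j : Fin K)
    (hj : j ∉ J) :
    ((K : ℝ) - S) * ∑ p ∈ (univ.filter fun p : Equiv.Perm (Fin K) =>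
        (univ.filter fun x => ((p x : ℕ) < S)) = J), (c (p j))^2
    = (∑ i ∈ univ.filter (fun i : Fin K => ¬ (i:ℕ) < S), (c i)^2) *
      ((univ.filter fun p : Equiv.Perm (Fin K) =>
        (univ.filter fun x => ((p x : ℕ) < S)) = J)).card := by
  classical
  set F := (univ.filter fun p : Equiv.Perm (Fin K) =>
      (univ.filter fun x => ((p x : ℕ) < S)) = J) with hF
  have hmap : ∀ p ∈ F, p j ∈ univ.filter (fun i : Fin K => ¬ (i:ℕ) < S) := by
    intro p hp
    simp only [hF, mem_filter, mem_univ, true_and] at hp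
    rw [← hp] at hj
    simp only [mem_filter, mem_univ, true_and] at hj ⊢
    exact hj
  set i₀ : Fin K := ⟨S, hSK⟩ with hi₀
  set M : ℕ := ((univ.filter fun p : Equiv.Perm (Fin K) =>
      (univ.filter fun x => ((p x : ℕ) < S)) = J ∧ p j = i₀)).card with hM
  have hfib : ∀ i ∈ univ.filter (fun i : Fin K => ¬ (i:ℕ) < S),
      ∑ p ∈ F.filter (fun p => p j = i), (c (p j))^2 = M * (c i)^2 := by
    intro i hi
    simp only [mem_filter, mem_univ, true_and] at hi
    have h1 : ∑ p ∈ F.filter (fun p => p j = i), (c (p j))^2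
        = (F.filter (fun p => p j = i)).card * (c i)^2 := by
      rw [Finset.sum_congr rfl (fun p hp => by
        simp only [mem_filter] at hp
        rw [hp.2]), Finset.sum_const, nsmul_eq_mul]
    rw [h1, hF, Finset.filter_filter]
    rw [M_const J j i i₀ ⟨fun h => absurd h hi, fun h => absurd h (lt_irrefl S)⟩]
  have hsplit : ∑ p ∈ F, (c (p j))^2
      = ∑ i ∈ univ.filter (fun i : Fin K => ¬ (i:ℕ) < S),
          ∑ p ∈ F.filter (fun p => p j = i), (c (p j))^2 :=
    (Finset.sum_fiberwise_of_maps_to hmap _).symm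
  have hcard : F.card = (K - S) * M := by
    rw [Finset.card_eq_sum_card_fiberwise hmap]
    have : ∀ i ∈ univ.filter (fun i : Fin K => ¬ (i:ℕ) < S),
        (F.filter (fun p => p j = i)).card = M := by
      intro i hi
      simp only [mem_filter, mem_univ, true_and] at hi
      rw [hF, Finset.filter_filter]
      exact M_const J j i i₀ ⟨fun h => absurd h hi, fun h => absurd h (lt_irrefl S)⟩
    rw [Finset.sum_congr rfl this, Finset.sum_const, card_T0c hSK.le, smul_eq_mul]
  rw [hsplit, Finset.sum_congr rfl hfib, hcard, ← Finset.mul_sum]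
  have : ((K - S : ℕ) : ℝ) = (K : ℝ) - S := by
    push_cast [Nat.cast_sub hSK.le]; ring
  push_cast [this]
  ring

end Helpers

/-- Orthogonal projection (as an endomorphism) onto the span of the columns of `v`
indexed by the finite set `J`. -/
noncomputable def projSpan {d K : ℕ} (v : Fin K → EuclideanSpace ℝ (Fin d))
    (J : Finset (Fin K)) :
    EuclideanSpace ℝ (Fin d) →L[ℝ] EuclideanSpace ℝ (Fin d) :=
  (Submodule.span ℝ (v '' ↑J)).subtypeL ∘L Submodule.orthogonalProjection (Submodule.span ℝ (v '' ↑J))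

/-- expectation of the squared norm of the projection `P_{I_p}(Ψ) Φ c_{p,σ}`
over uniformly random permutations and signs. -/
theorem expectation_projection_general {d K S : ℕ} (hS : 0 < S) (hSK : S < K)
    (φ ψ : Fin K → EuclideanSpace ℝ (Fin d))
    (hφ : ∀ i, ‖φ i‖ = 1) (hψ : ∀ i, ‖ψ i‖ = 1)
    (hind : ∀ J : Finset (Fin K), J.card = S →
      LinearIndependent ℝ (fun j : J => ψ j))
    (c : Fin K → ℝ) (hc0 : ∀ i, 0 ≤ c i) (hmono : ∀ i j : Fin K, i ≤ j → c j ≤ c i)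
    (hc2 : ∑ i, (c i) ^ 2 = 1)
    (γ2 : ℝ) (hγ : γ2 = ∑ i ∈ Finset.univ.filter (fun i : Fin K => (i : ℕ) < S), (c i) ^ 2) :
    (∑ p : Equiv.Perm (Fin K), ∑ σ : Fin K → Bool,
        ‖projSpan ψ (Finset.univ.filter fun i => ((p i : ℕ) < S))
            (∑ j, ((if σ j then (1 : ℝ) else -1) * c (p j)) • φ j)‖ ^ 2)
      / (K.factorial * 2 ^ K)
    = (1 - γ2) / ((K : ℝ) - S) * ((K.choose S : ℝ))⁻¹ *
        (∑ J ∈ Finset.univ.filter (fun J : Finset (Fin K) => J.card = S),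
          ∑ i, ‖projSpan ψ J (φ i)‖ ^ 2)
      + (γ2 / S - (1 - γ2) / ((K : ℝ) - S)) * ((K.choose S : ℝ))⁻¹ *
        (∑ J ∈ Finset.univ.filter (fun J : Finset (Fin K) => J.card = S),
          ∑ i ∈ J, ‖projSpan ψ J (φ i)‖ ^ 2) := by
  classical
  -- step 1: average over signs
  have step1 : ∀ p : Equiv.Perm (Fin K),
      ∑ σ : Fin K → Bool,
        ‖projSpan ψ (Finset.univ.filter fun i => ((p i : ℕ) < S))
            (∑ j, ((if σ j then (1 : ℝ) else -1) * c (p j)) • φ j)‖ ^ 2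
      = 2 ^ K * ∑ j, (c (p j))^2 *
          ‖projSpan ψ (Finset.univ.filter fun i => ((p i : ℕ) < S)) (φ j)‖ ^ 2 := by
    intro p
    have hproj : ∀ σ : Fin K → Bool,
        projSpan ψ (Finset.univ.filter fun i => ((p i : ℕ) < S))
            (∑ j, ((if σ j then (1 : ℝ) else -1) * c (p j)) • φ j)
        = ∑ j, (if σ j then (1:ℝ) else -1) •
            (c (p j) • projSpan ψ (Finset.univ.filter fun i => ((p i : ℕ) < S)) (φ j)) := by
      intro σ
      rw [map_sum]
      exact Finset.sum_congr rfl fun j _ => by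
        rw [ContinuousLinearMap.map_smul, mul_smul]
    simp_rw [hproj]
    rw [sign_sum_sq]
    congr 1
    refine Finset.sum_congr rfl fun j _ => ?_
    rw [norm_smul, mul_pow, Real.norm_eq_abs, sq_abs]
  rw [Finset.sum_congr rfl (fun p _ => step1 p), ← Finset.mul_sum]
  -- step 2: group permutations by the index set J
  rw [← Finset.sum_fiberwise_of_maps_to (fun p _ => Jp_mem hSK.le p)
    (fun p => ∑ j, (c (p j))^2 *
      ‖projSpan ψ (Finset.univ.filter fun i => ((p i : ℕ) < S)) (φ j)‖ ^ 2)]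
  -- per-J evaluation
  set A := Finset.univ.filter (fun J : Finset (Fin K) => J.card = S) with hA
  have hγ2c : ∑ i ∈ Finset.univ.filter (fun i : Fin K => ¬ (i : ℕ) < S), (c i) ^ 2
      = 1 - γ2 := by
    have := Finset.sum_filter_add_sum_filter_not (Finset.univ : Finset (Fin K))
      (fun i : Fin K => (i : ℕ) < S) (fun i => (c i)^2)
    rw [hc2] at this
    rw [hγ]; linarith
  -- basic nonvanishing facts
  have hC0 : (0:ℝ) < (K.choose S : ℝ) := by
    exact_mod_cast Nat.choose_pos hSK.le
  have hS0 : (0:ℝ) < (S:ℝ) := by exact_mod_cast hS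
  have hKS0 : (0:ℝ) < (K:ℝ) - S := by
    have : (S:ℝ) < K := by exact_mod_cast hSK
    linarith
  have hKf0 : (0:ℝ) < (K.factorial : ℝ) := by exact_mod_cast K.factorial_pos
  have h2K0 : (0:ℝ) < (2:ℝ)^K := by positivity
  have perJ : ∀ J ∈ A,
      ∑ p ∈ Finset.univ.filter (fun p : Equiv.Perm (Fin K) =>
          (Finset.univ.filter fun x => ((p x : ℕ) < S)) = J),
        ∑ j, (c (p j))^2 *
          ‖projSpan ψ (Finset.univ.filter fun i => ((p i : ℕ) < S)) (φ j)‖ ^ 2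
      = γ2 * (K.factorial / (K.choose S : ℝ)) / S * (∑ j ∈ J, ‖projSpan ψ J (φ j)‖ ^ 2)
        + (1 - γ2) * (K.factorial / (K.choose S : ℝ)) / ((K:ℝ) - S) *
            (∑ j ∈ Jᶜ, ‖projSpan ψ J (φ j)‖ ^ 2) := by
    intro J hJ
    simp only [hA, mem_filter, mem_univ, true_and] at hJ
    set F := Finset.univ.filter (fun p : Equiv.Perm (Fin K) =>
        (Finset.univ.filter fun x => ((p x : ℕ) < S)) = J) with hF
    have hNval : ((F.card : ℝ)) = K.factorial / (K.choose S : ℝ) := by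
      have := N_choose hSK.le J hJ
      rw [← hF] at this
      field_simp
      exact_mod_cast (by rw [mul_comm]; exact this)
    have hrw : ∀ p ∈ F, ∑ j, (c (p j))^2 *
          ‖projSpan ψ (Finset.univ.filter fun i => ((p i : ℕ) < S)) (φ j)‖ ^ 2
        = ∑ j, (c (p j))^2 * ‖projSpan ψ J (φ j)‖ ^ 2 := by
      intro p hp
      simp only [hF, mem_filter, mem_univ, true_and] at hp
      rw [hp]
    rw [Finset.sum_congr rfl hrw, Finset.sum_comm]
    have hsw : ∀ j : Fin K, ∑ p ∈ F, (c (p j))^2 * ‖projSpan ψ J (φ j)‖ ^ 2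
        = (∑ p ∈ F, (c (p j))^2) * ‖projSpan ψ J (φ j)‖ ^ 2 := fun j =>
      (Finset.sum_mul _ _ _).symm
    rw [Finset.sum_congr rfl (fun j _ => hsw j)]
    rw [← Finset.sum_add_sum_compl J
      (fun j => (∑ p ∈ F, (c (p j))^2) * ‖projSpan ψ J (φ j)‖ ^ 2)]
    congr 1
    · have : ∀ j ∈ J, (∑ p ∈ F, (c (p j))^2) * ‖projSpan ψ J (φ j)‖ ^ 2
          = (γ2 * (K.factorial / (K.choose S : ℝ)) / S) * ‖projSpan ψ J (φ j)‖ ^ 2 := by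
        intro j hj
        have hkey := key_in hS hSK c J j hj
        rw [← hF, ← hγ] at hkey
        have : ∑ p ∈ F, (c (p j))^2 = γ2 * (K.factorial / (K.choose S : ℝ)) / S := by
          rw [← hNval]
          field_simp at hkey ⊢
          linarith [hkey]
        rw [this]
      rw [Finset.sum_congr rfl this, ← Finset.mul_sum]
    · have : ∀ j ∈ Jᶜ, (∑ p ∈ F, (c (p j))^2) * ‖projSpan ψ J (φ j)‖ ^ 2
          = ((1 - γ2) * (K.factorial / (K.choose S : ℝ)) / ((K:ℝ) - S)) *
              ‖projSpan ψ J (φ j)‖ ^ 2 := by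
        intro j hj
        rw [Finset.mem_compl] at hj
        have hkey := key_out hS hSK c J j hj
        rw [← hF, hγ2c] at hkey
        have : ∑ p ∈ F, (c (p j))^2 = (1 - γ2) * (K.factorial / (K.choose S : ℝ)) / ((K:ℝ) - S) := by
          rw [← hNval]
          field_simp at hkey ⊢
          linarith [hkey]
        rw [this]
      rw [Finset.sum_congr rfl this, ← Finset.mul_sum]
  rw [Finset.sum_congr rfl perJ]
  -- final algebra
  rw [Finset.sum_add_distrib, ← Finset.mul_sum, ← Finset.mul_sum]
  have hJsplit : ∀ J ∈ A, ∑ i, ‖projSpan ψ J (φ i)‖ ^ 2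
      = ∑ i ∈ J, ‖projSpan ψ J (φ i)‖ ^ 2 + ∑ i ∈ Jᶜ, ‖projSpan ψ J (φ i)‖ ^ 2 := by
    intro J _
    rw [Finset.sum_add_sum_compl]
  rw [Finset.sum_congr rfl hJsplit, Finset.sum_add_distrib]
  set X := ∑ J ∈ A, ∑ i ∈ J, ‖projSpan ψ J (φ i)‖ ^ 2
  set Y := ∑ J ∈ A, ∑ i ∈ Jᶜ, ‖projSpan ψ J (φ i)‖ ^ 2
  field_simp
  ring
end
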